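/- Let n, n_1, n_2, m be positive integers with n ≤ n_1 ≤ m and n ≤ n_2 ≤ m. Let X be the n_2×n_1 upper-left submatrix of a Haar-distributed m×m complex unitary matrix, and X̃ the n_2×n upper-left submatrix of a Haar-distributed m×m complex unitary matrix. Let W be a fixed n_1×n complex matrix and W̃ := (Wᴴ W)^{1/2} (positive semidefinite square root, an n×n matrix). Then charpoly( (XW)ᴴ (XW) ) and charpoly( (X̃ W̃)ᴴ (X̃ W̃) ) have the same distribution; equivalently, XW and X̃ W̃ have the same distribution of singular values. -/

import Mathlib

open MeasureTheory Matrix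
open scoped ComplexOrder InnerProductSpace

/-- The Borel σ-algebra on matrices (as a pi type). -/
noncomputable instance matrixMeasurableSpace {m n α : Type*} [MeasurableSpace α] :
    MeasurableSpace (Matrix m n α) :=
  (inferInstance : MeasurableSpace (m → n → α))

/-- The σ-algebra on polynomials generated by the coefficient functions (so that two
random polynomials have the same law iff their coefficient processes do). -/
noncomputable instance polynomialMeasurableSpace : MeasurableSpace (Polynomial ℂ) :=
  MeasurableSpace.comap (fun p (n : ℕ) => p.coeff n) inferInstance

/-- A probability measure on the unitary group which is invariant under left
translations; on this compact (Polish) group this characterizes the Haar probability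
measure. -/
def IsHaarUnitary {L : ℕ} (μ : Measure (Matrix.unitaryGroup (Fin L) ℂ)) : Prop :=
  IsProbabilityMeasure μ ∧
    ∀ g : Matrix.unitaryGroup (Fin L) ℂ, Measure.map (fun u => g * u) μ = μ


instance matrixBorelSpace {m n : Type*} [Countable m] [Countable n] :
    BorelSpace (Matrix m n ℂ) :=
  inferInstanceAs (BorelSpace (m → n → ℂ))

instance matrixSecondCountable {m n : Type*} [Countable m] [Countable n] :
    SecondCountableTopology (Matrix m n ℂ) :=
  inferInstanceAs (SecondCountableTopology (m → n → ℂ))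

variable {m : ℕ}

instance unitaryGroupContinuousMul : ContinuousMul (Matrix.unitaryGroup (Fin m) ℂ) := by
  constructor
  apply continuous_induced_rng.2
  show Continuous fun p : (Matrix.unitaryGroup (Fin m) ℂ) × (Matrix.unitaryGroup (Fin m) ℂ) =>
    (p.1 : Matrix (Fin m) (Fin m) ℂ) * (p.2 : Matrix (Fin m) (Fin m) ℂ)
  exact ((continuous_subtype_val.comp continuous_fst).matrix_mul
    (continuous_subtype_val.comp continuous_snd))

instance unitaryGroupContinuousInv : ContinuousInv (Matrix.unitaryGroup (Fin m) ℂ) := by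
  constructor
  apply continuous_induced_rng.2
  show Continuous fun u : Matrix.unitaryGroup (Fin m) ℂ =>
    star (u : Matrix (Fin m) (Fin m) ℂ)
  exact continuous_subtype_val.star

instance unitaryGroupTopGroup : IsTopologicalGroup (Matrix.unitaryGroup (Fin m) ℂ) where

instance unitaryGroupCompact : CompactSpace (Matrix.unitaryGroup (Fin m) ℂ) := by
  suffices h : IsCompact (Matrix.unitaryGroup (Fin m) ℂ : Set (Matrix (Fin m) (Fin m) ℂ)) by
    exact isCompact_iff_compactSpace.mp h
  have hK : IsCompact {A : Matrix (Fin m) (Fin m) ℂ |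
      ∀ i j, A i j ∈ Metric.closedBall (0 : ℂ) 1} := by
    have : IsCompact (X := Matrix (Fin m) (Fin m) ℂ) (Set.univ.pi fun _ : Fin m =>
        (Set.univ.pi fun _ : Fin m => Metric.closedBall (0 : ℂ) 1)) :=
      isCompact_univ_pi fun _ => isCompact_univ_pi fun _ => isCompact_closedBall 0 1
    refine cast (congrArg (IsCompact (X := Matrix (Fin m) (Fin m) ℂ)) ?_).symm this
    ext A
    constructor
    · intro h
      intro i _
      intro j _
      exact h i j
    · intro h i j
      exact h i (Set.mem_univ i) j (Set.mem_univ j)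
  have hsub : (Matrix.unitaryGroup (Fin m) ℂ : Set (Matrix (Fin m) (Fin m) ℂ)) ⊆
      {A | ∀ i j, A i j ∈ Metric.closedBall (0 : ℂ) 1} := by
    intro A hA i j
    have h1 : (A * star A) i i = 1 := by
      rw [(Matrix.mem_unitaryGroup_iff).1 hA]; simp
    have h2 : ∑ k, Complex.normSq (A i k) = 1 := by
      have := congrArg Complex.re h1
      rw [Matrix.mul_apply] at this
      simpa [Matrix.star_apply, Complex.mul_conj] using this
    have h3 : Complex.normSq (A i j) ≤ 1 := by
      rw [← h2]
      exact Finset.single_le_sum (fun k _ => Complex.normSq_nonneg _) (Finset.mem_univ j)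
    rw [Metric.mem_closedBall, dist_zero_right]
    rw [show ((1:ℝ)) = Real.sqrt 1 by simp]
    rw [Complex.norm_def]
    exact Real.sqrt_le_sqrt h3
  have hclosed : IsClosed (Matrix.unitaryGroup (Fin m) ℂ : Set (Matrix (Fin m) (Fin m) ℂ)) := by
    have : (Matrix.unitaryGroup (Fin m) ℂ : Set (Matrix (Fin m) (Fin m) ℂ)) =
        (fun A : Matrix (Fin m) (Fin m) ℂ => (star A * A, A * star A)) ⁻¹'
          {((1 : Matrix (Fin m) (Fin m) ℂ), (1 : Matrix (Fin m) (Fin m) ℂ))} := by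
      ext A
      simp only [Set.mem_preimage, Set.mem_singleton_iff, Prod.mk.injEq]
      exact Iff.rfl
    rw [this]
    exact IsClosed.preimage
      ((continuous_id.star.matrix_mul continuous_id).prodMk
        (continuous_id.matrix_mul continuous_id.star)) isClosed_singleton
  exact hK.of_isClosed_subset hclosed hsub

instance unitaryGroupBorel : BorelSpace (Matrix.unitaryGroup (Fin m) ℂ) :=
  Subtype.borelSpace (Matrix.unitaryGroup (Fin m) ℂ : Set (Matrix (Fin m) (Fin m) ℂ))


lemma IsHaarUnitary.isHaarMeasure {L : ℕ} {μ : Measure (Matrix.unitaryGroup (Fin L) ℂ)}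
    (hμ : IsHaarUnitary μ) : μ.IsHaarMeasure := by
  haveI : IsProbabilityMeasure μ := hμ.1
  haveI hli : μ.IsMulLeftInvariant := ⟨hμ.2⟩
  haveI : μ.IsOpenPosMeasure :=
    isOpenPosMeasure_of_mulLeftInvariant_of_compact (μ := μ) Set.univ isCompact_univ (by simp)
  constructor

lemma IsHaarUnitary.eq {L : ℕ} {μ ν : Measure (Matrix.unitaryGroup (Fin L) ℂ)}
    (hμ : IsHaarUnitary μ) (hν : IsHaarUnitary ν) : μ = ν := by
  haveI : IsProbabilityMeasure μ := hμ.1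
  haveI : IsProbabilityMeasure ν := hν.1
  haveI := hμ.isHaarMeasure
  haveI := hν.isHaarMeasure
  exact Measure.isHaarMeasure_eq_of_isProbabilityMeasure μ ν

lemma IsHaarUnitary.map_mul_right {L : ℕ} {μ : Measure (Matrix.unitaryGroup (Fin L) ℂ)}
    (hμ : IsHaarUnitary μ) (V : Matrix.unitaryGroup (Fin L) ℂ) :
    Measure.map (fun u => u * V) μ = μ := by
  haveI : IsProbabilityMeasure μ := hμ.1
  refine IsHaarUnitary.eq ⟨?_, ?_⟩ hμ
  · exact Measure.isProbabilityMeasure_map (measurable_mul_const V).aemeasurable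
  · intro g
    rw [Measure.map_map (measurable_const_mul g) (measurable_mul_const V),
      show ((fun u => g * u) ∘ fun u => u * V) = (fun u => u * V) ∘ (fun u => g * u) by
        funext u; simp [Function.comp, mul_assoc],
      ← Measure.map_map (measurable_mul_const V) (measurable_const_mul g), hμ.2 g]

section MeasPoly

variable {α : Type*} [MeasurableSpace α]

lemma measurable_of_coeff_measurable {f : α → Polynomial ℂ}
    (h : ∀ k, Measurable fun a => (f a).coeff k) : Measurable f := by
  intro t ht
  obtain ⟨t', ht', rfl⟩ := ht
  exact (measurable_pi_lambda _ h) ht'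

lemma measurable_coeff_mul {f g : α → Polynomial ℂ}
    (hf : ∀ k, Measurable fun a => (f a).coeff k)
    (hg : ∀ k, Measurable fun a => (g a).coeff k) (k : ℕ) :
    Measurable fun a => (f a * g a).coeff k := by
  simp only [Polynomial.coeff_mul]
  exact Finset.measurable_sum _ fun p _ => (hf p.1).mul (hg p.2)

lemma measurable_coeff_prod {ι : Type*} (s : Finset ι) (f : ι → α → Polynomial ℂ)
    (h : ∀ i k, Measurable fun a => (f i a).coeff k) (k : ℕ) :
    Measurable fun a => (∏ i ∈ s, f i a).coeff k := by
  classical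
  induction s using Finset.cons_induction generalizing k with
  | empty => simp only [Finset.prod_empty]; exact measurable_const
  | cons i s hi ih =>
    simp only [Finset.prod_cons]
    exact measurable_coeff_mul (h i) (fun k => ih k) k

lemma measurable_charpoly {N : ℕ} :
    Measurable fun M : Matrix (Fin N) (Fin N) ℂ => M.charpoly := by
  apply measurable_of_coeff_measurable
  intro k
  have : (fun M : Matrix (Fin N) (Fin N) ℂ => M.charpoly.coeff k)
      = fun M => ∑ σ : Equiv.Perm (Fin N),
          (Equiv.Perm.sign σ : ℤ) •
            (∏ i, (Matrix.charmatrix M) (σ i) i).coeff k := by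
    funext M
    rw [Matrix.charpoly, Matrix.det_apply, Polynomial.finset_sum_coeff]
    simp only [Units.smul_def, Polynomial.coeff_smul]
  rw [this]
  apply Finset.measurable_sum
  intro σ _
  apply Measurable.const_smul
  apply measurable_coeff_prod
  intro i k
  have : (fun M : Matrix (Fin N) (Fin N) ℂ => ((Matrix.charmatrix M) (σ i) i).coeff k)
      = fun M => ((Matrix.diagonal fun _ : Fin N => (Polynomial.X : Polynomial ℂ)) (σ i) i).coeff k
          - if k = 0 then M (σ i) i else 0 := by
    funext M
    rw [Matrix.charmatrix_apply, Polynomial.coeff_sub, Polynomial.coeff_C]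
  rw [this]
  apply Measurable.sub measurable_const
  by_cases hk : k = 0
  · simp only [hk, if_true]
    exact (measurable_pi_apply _).comp (measurable_pi_apply _)
  · simp only [hk, if_false]
    exact measurable_const

end MeasPoly


lemma exists_isometryEquiv_comp_eq {E F : Type*}
    [NormedAddCommGroup E] [InnerProductSpace ℂ E] [FiniteDimensional ℂ E]
    [NormedAddCommGroup F] [InnerProductSpace ℂ F] [FiniteDimensional ℂ F]
    (T S : F →ₗ[ℂ] E)
    (hinner : ∀ x y, ⟪T x, T y⟫_ℂ = ⟪S x, S y⟫_ℂ) :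
    ∃ U : E ≃ₗᵢ[ℂ] E, ∀ x, U (T x) = S x := by
  classical
  have hnorm : ∀ x, ‖T x‖ = ‖S x‖ := by
    intro x
    rw [@norm_eq_sqrt_re_inner ℂ, @norm_eq_sqrt_re_inner ℂ, hinner]
  have hker : LinearMap.ker T = LinearMap.ker S := by
    ext x
    simp only [LinearMap.mem_ker]
    constructor
    · intro hx
      have := hnorm x
      rw [hx, norm_zero] at this
      exact norm_eq_zero.mp this.symm
    · intro hx
      have := hnorm x
      rw [hx, norm_zero] at this
      exact norm_eq_zero.mp this
  set K : Submodule ℂ F := (LinearMap.ker T)ᗮ with hK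
  set T₀ : K →ₗ[ℂ] E := T ∘ₗ K.subtype with hT₀
  have hinj : Function.Injective T₀ := by
    rw [← LinearMap.ker_eq_bot, Submodule.eq_bot_iff]
    rintro ⟨x, hxK⟩ hx
    have hxker : x ∈ LinearMap.ker T := by
      simpa [hT₀, LinearMap.mem_ker] using hx
    have hd := Submodule.orthogonal_disjoint (K := LinearMap.ker T)
    have : x ∈ (⊥ : Submodule ℂ F) := hd.le_bot (Submodule.mem_inf.mpr ⟨hxker, hxK⟩)
    simpa using this
  have hrange : LinearMap.range T₀ = LinearMap.range T := by
    apply le_antisymm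
    · rintro y ⟨x, rfl⟩
      exact ⟨x.1, rfl⟩
    · rintro y ⟨x, rfl⟩
      refine ⟨⟨x - ((LinearMap.ker T).orthogonalProjectionOnto x : F), ?_⟩, ?_⟩
      · exact Submodule.sub_starProjection_mem_orthogonal x
      · have : T ((LinearMap.ker T).starProjection x) = 0 :=
          ((LinearMap.ker T).orthogonalProjectionOnto x).2
        simp [hT₀, map_sub, this]
  set e : K ≃ₗ[ℂ] LinearMap.range T :=
    (LinearEquiv.ofInjective T₀ hinj).trans (LinearEquiv.ofEq _ _ hrange) with he
  have he_apply : ∀ x : K, (e x : E) = T x.1 := by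
    intro x
    simp [he, LinearEquiv.ofInjective_apply, hT₀]
  set f₀ : LinearMap.range T →ₗ[ℂ] E :=
    S ∘ₗ K.subtype ∘ₗ (e.symm : LinearMap.range T ≃ₗ[ℂ] K).toLinearMap with hf₀
  have hf₀_apply : ∀ y : LinearMap.range T, f₀ y = S ((e.symm y : K) : F) := fun _ => rfl
  have hf₀_inner : ∀ y z : LinearMap.range T, ⟪f₀ y, f₀ z⟫_ℂ = ⟪(y : E), (z : E)⟫_ℂ := by
    intro y z
    rw [hf₀_apply, hf₀_apply, ← hinner, ← he_apply, ← he_apply, e.apply_symm_apply,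
      e.apply_symm_apply]
  set p := Module.finrank ℂ E with hp
  set r := Module.finrank ℂ ↥(LinearMap.range T) with hr_def
  have hr : r ≤ p := Submodule.finrank_le _
  set b : OrthonormalBasis (Fin r) ℂ ↥(LinearMap.range T) := stdOrthonormalBasis ℂ _ with hb
  set s : Set (Fin p) := {i | (i : ℕ) < r} with hs
  set v : Fin p → E := fun i => if h : (i : ℕ) < r then (b ⟨i, h⟩ : E) else 0 with hv
  set w : Fin p → E := fun i => if h : (i : ℕ) < r then f₀ (b ⟨i, h⟩) else 0 with hw
  have hcard : Module.finrank ℂ E = Fintype.card (Fin p) := by simp [hp]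
  have hbon := b.orthonormal
  rw [orthonormal_iff_ite] at hbon
  have hij : ∀ (i j : Fin p) (hi' : (i : ℕ) < r) (hj' : (j : ℕ) < r) (hi : i ∈ s) (hj : j ∈ s),
      ((⟨(i : ℕ), hi'⟩ : Fin r) = ⟨(j : ℕ), hj'⟩ ↔ (⟨i, hi⟩ : s) = ⟨j, hj⟩) := by
    intro i j hi' hj' hi hj
    constructor
    · intro h
      have hval := congrArg (Fin.val (n := r)) h
      exact Subtype.ext (Fin.ext hval)
    · intro h
      have hval : (i : ℕ) = (j : ℕ) := congrArg (fun x : s => ((x : Fin p) : ℕ)) h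
      exact Fin.ext hval
  have hvon : Orthonormal ℂ (s.restrict v) := by
    rw [orthonormal_iff_ite]
    rintro ⟨i, hi⟩ ⟨j, hj⟩
    have hi' : (i : ℕ) < r := hi
    have hj' : (j : ℕ) < r := hj
    simp only [Set.restrict, Set.domRestrict_apply, hv, dif_pos hi', dif_pos hj']
    rw [← Submodule.coe_inner, hbon]
    by_cases hq : (⟨i, hi⟩ : s) = ⟨j, hj⟩
    · rw [if_pos ((hij i j hi' hj' hi hj).mpr hq), if_pos hq]
    · rw [if_neg (fun hc => hq ((hij i j hi' hj' hi hj).mp hc)), if_neg hq]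
  have hwon : Orthonormal ℂ (s.restrict w) := by
    rw [orthonormal_iff_ite]
    rintro ⟨i, hi⟩ ⟨j, hj⟩
    have hi' : (i : ℕ) < r := hi
    have hj' : (j : ℕ) < r := hj
    simp only [Set.restrict, Set.domRestrict_apply, hw, dif_pos hi', dif_pos hj']
    rw [hf₀_inner, ← Submodule.coe_inner, hbon]
    by_cases hq : (⟨i, hi⟩ : s) = ⟨j, hj⟩
    · rw [if_pos ((hij i j hi' hj' hi hj).mpr hq), if_pos hq]
    · rw [if_neg (fun hc => hq ((hij i j hi' hj' hi hj).mp hc)), if_neg hq]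
  obtain ⟨bb, hbb⟩ := hvon.exists_orthonormalBasis_extension_of_card_eq hcard
  obtain ⟨cc, hcc⟩ := hwon.exists_orthonormalBasis_extension_of_card_eq hcard
  set U : E ≃ₗᵢ[ℂ] E := bb.repr.trans cc.repr.symm with hU
  have hUbb : ∀ i, U (bb i) = cc i := by
    intro i
    simp [hU, OrthonormalBasis.repr_self, OrthonormalBasis.repr_symm_single]
  have hUy : ∀ y : LinearMap.range T, U (y : E) = f₀ y := by
    intro y
    have hy := b.sum_repr y
    have hy' : (y : E) = ∑ i, b.repr y i • ((b i : E)) := by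
      conv_lhs => rw [← hy]
      push_cast
      rfl
    have hbv : ∀ i : Fin r, (b i : E) = bb (Fin.castLE hr i) := by
      intro i
      have hmem : (Fin.castLE hr i : Fin p) ∈ s := by
        simpa [hs] using i.2
      rw [hbb _ hmem]
      simp only [hv]
      rw [dif_pos (show ((Fin.castLE hr i : Fin p) : ℕ) < r from i.2)]
      exact congrArg (fun z : ↥(LinearMap.range T) => (z : E)) (congrArg b (Fin.ext rfl))
    have hcw : ∀ i : Fin r, cc (Fin.castLE hr i) = f₀ (b i) := by
      intro i
      have hmem : (Fin.castLE hr i : Fin p) ∈ s := by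
        simpa [hs] using i.2
      rw [hcc _ hmem]
      simp only [hw]
      rw [dif_pos (show ((Fin.castLE hr i : Fin p) : ℕ) < r from i.2)]
      exact congrArg f₀ (congrArg b (Fin.ext rfl))
    calc U (y : E) = ∑ i, b.repr y i • U (bb (Fin.castLE hr i)) := by
          rw [hy', map_sum]
          congr 1
          funext i
          rw [_root_.map_smul, hbv]
      _ = ∑ i, b.repr y i • f₀ (b i) := by
          congr 1
          funext i
          rw [hUbb, hcw]
      _ = f₀ (∑ i, b.repr y i • b i) := by
          rw [map_sum]
          congr 1
          funext i
          rw [_root_.map_smul]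
      _ = f₀ y := by rw [hy]
  refine ⟨U, ?_⟩
  intro x
  set x₁ : F := (K.orthogonalProjectionOnto x : F) with hx₁
  have hx₁K : x₁ ∈ K := (K.orthogonalProjectionOnto x).2
  have hx₀ : x - x₁ ∈ Kᗮ := Submodule.sub_starProjection_mem_orthogonal x
  have hx₀ker : x - x₁ ∈ LinearMap.ker T := by
    rwa [hK, Submodule.orthogonal_orthogonal] at hx₀
  have hx₀kerS : x - x₁ ∈ LinearMap.ker S := hker ▸ hx₀ker
  have hTx : T x = T x₁ := by
    have h0 : T (x - x₁) = 0 := hx₀ker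
    rw [map_sub, sub_eq_zero] at h0
    exact h0
  have hSx : S x = S x₁ := by
    have h0 : S (x - x₁) = 0 := hx₀kerS
    rw [map_sub, sub_eq_zero] at h0
    exact h0
  have hy : T x₁ = ((e ⟨x₁, hx₁K⟩ : LinearMap.range T) : E) := (he_apply ⟨x₁, hx₁K⟩).symm
  rw [hTx, hSx, hy, hUy, hf₀_apply, e.symm_apply_apply]

lemma toEuclideanLin_mul {l m n : ℕ} (B : Matrix (Fin l) (Fin m) ℂ) (C : Matrix (Fin m) (Fin n) ℂ) :
    Matrix.toEuclideanLin (B * C) =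
      (Matrix.toEuclideanLin B).comp (Matrix.toEuclideanLin C) := by
  apply LinearMap.ext
  intro x
  simp [Matrix.toEuclideanLin_apply, Matrix.mulVec_mulVec]

lemma toEuclideanLin_one {n : ℕ} :
    Matrix.toEuclideanLin (1 : Matrix (Fin n) (Fin n) ℂ) = LinearMap.id := by
  apply LinearMap.ext
  intro x
  simp [Matrix.toEuclideanLin_apply, Matrix.one_mulVec]

lemma exists_mem_unitaryGroup_mul_eq {p q : ℕ} (M N : Matrix (Fin p) (Fin q) ℂ)
    (h : Mᴴ * M = Nᴴ * N) : ∃ A ∈ Matrix.unitaryGroup (Fin p) ℂ, A * N = M := by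
  set T := Matrix.toEuclideanLin N with hT
  set S := Matrix.toEuclideanLin M with hS
  have key : ∀ (P : Matrix (Fin p) (Fin q) ℂ) (x y : EuclideanSpace ℂ (Fin q)),
      ⟪Matrix.toEuclideanLin P x, Matrix.toEuclideanLin P y⟫_ℂ =
        ⟪x, Matrix.toEuclideanLin (Pᴴ * P) y⟫_ℂ := by
    intro P x y
    rw [toEuclideanLin_mul, LinearMap.comp_apply, Matrix.toEuclideanLin_conjTranspose_eq_adjoint,
      LinearMap.adjoint_inner_right]
  have hinner : ∀ x y, ⟪T x, T y⟫_ℂ = ⟪S x, S y⟫_ℂ := by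
    intro x y
    rw [hT, hS, key, key, h]
  obtain ⟨U, hU⟩ := exists_isometryEquiv_comp_eq T S hinner
  set UL : EuclideanSpace ℂ (Fin p) →ₗ[ℂ] EuclideanSpace ℂ (Fin p) :=
    (U.toLinearEquiv : EuclideanSpace ℂ (Fin p) →ₗ[ℂ] EuclideanSpace ℂ (Fin p)) with hUL
  set A : Matrix (Fin p) (Fin p) ℂ := Matrix.toEuclideanLin.symm UL with hA
  have hAL : Matrix.toEuclideanLin A = UL := Matrix.toEuclideanLin.apply_symm_apply UL
  have hadj : LinearMap.adjoint UL =
      (U.symm.toLinearEquiv : EuclideanSpace ℂ (Fin p) →ₗ[ℂ] EuclideanSpace ℂ (Fin p)) := by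
    symm
    rw [LinearMap.eq_adjoint_iff]
    intro x y
    calc ⟪U.symm x, y⟫_ℂ = ⟪U (U.symm x), U y⟫_ℂ := (U.inner_map_map _ _).symm
      _ = ⟪x, UL y⟫_ℂ := by rw [U.apply_symm_apply]; rfl
  have hmem : A ∈ Matrix.unitaryGroup (Fin p) ℂ := by
    rw [Matrix.mem_unitaryGroup_iff']
    apply Matrix.toEuclideanLin.injective
    rw [show star A = Aᴴ from rfl, toEuclideanLin_mul, hAL,
      Matrix.toEuclideanLin_conjTranspose_eq_adjoint, hAL, hadj, toEuclideanLin_one]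
    apply LinearMap.ext
    intro x
    exact U.symm_apply_apply x
  refine ⟨A, hmem, ?_⟩
  apply Matrix.toEuclideanLin.injective
  rw [toEuclideanLin_mul, hAL, ← hT, ← hS]
  apply LinearMap.ext
  intro x
  exact hU x

section Corner

variable {n n₁ n₂ m : ℕ}

/-- The `n₁ × n` "tall identity" matrix. -/
noncomputable def iotaMat (hn₁ : n ≤ n₁) : Matrix (Fin n₁) (Fin n) ℂ :=
  (1 : Matrix (Fin n₁) (Fin n₁) ℂ).submatrix id (Fin.castLE hn₁)

lemma mul_iotaMat (hn₁ : n ≤ n₁) (M : Matrix (Fin n₂) (Fin n₁) ℂ) :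
    M * iotaMat hn₁ = M.submatrix id (Fin.castLE hn₁) := by
  ext i k
  simp only [iotaMat, Matrix.mul_apply, Matrix.submatrix_apply, id_eq, Matrix.one_apply,
    mul_ite, mul_one, mul_zero]
  rw [Finset.sum_ite_eq' Finset.univ (Fin.castLE hn₁ k) (fun j => M i j)]
  simp

lemma iotaMat_conjTranspose_mul (hn₁ : n ≤ n₁) :
    (iotaMat hn₁)ᴴ * iotaMat hn₁ = (1 : Matrix (Fin n) (Fin n) ℂ) := by
  ext k l
  simp only [iotaMat, Matrix.mul_apply, Matrix.conjTranspose_apply, Matrix.submatrix_apply,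
    id_eq, Matrix.one_apply]
  simp only [apply_ite (star : ℂ → ℂ), star_one, star_zero]
  rw [Finset.sum_congr rfl (fun j _ => by
    rw [show ((if j = Fin.castLE hn₁ k then (1:ℂ) else 0) * if j = Fin.castLE hn₁ l then 1 else 0)
      = if j = Fin.castLE hn₁ k then (if j = Fin.castLE hn₁ l then (1:ℂ) else 0) else 0 by
        split_ifs <;> simp])]
  rw [Finset.sum_ite_eq' Finset.univ (Fin.castLE hn₁ k)
    (fun j => if j = Fin.castLE hn₁ l then (1:ℂ) else 0)]
  simp only [Finset.mem_univ, if_true]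
  by_cases hkl : k = l
  · simp [hkl]
  · rw [if_neg (fun hc => hkl (Fin.castLE_injective hn₁ (by exact hc))), if_neg hkl]

lemma wt_props {n n₁ : ℕ} (W : Matrix (Fin n₁) (Fin n) ℂ) :
    let S : Matrix (Fin n) (Fin n) ℂ :=
      ((Matrix.posSemidef_conjTranspose_mul_self W).1.eigenvectorUnitary :
                  Matrix (Fin n) (Fin n) ℂ) *
                Matrix.diagonal ((↑) ∘ (Real.sqrt ·) ∘
                  (Matrix.posSemidef_conjTranspose_mul_self W).1.eigenvalues) *
                (star (Matrix.posSemidef_conjTranspose_mul_self W).1.eigenvectorUnitary :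
                  Matrix (Fin n) (Fin n) ℂ)
    Sᴴ = S ∧ S * S = Wᴴ * W := by
  intro S
  have hnn := (Matrix.posSemidef_conjTranspose_mul_self W).eigenvalues_nonneg
  have hd : ∀ d : Fin n → ℝ, star (Complex.ofReal ∘ d) = Complex.ofReal ∘ d := fun d => by
    funext i; simp
  constructor
  · simp only [S, Matrix.conjTranspose_mul, Matrix.diagonal_conjTranspose, Matrix.mul_assoc]
    simp [Matrix.star_eq_conjTranspose]
    rw [hd]
  · have hspec := (Matrix.posSemidef_conjTranspose_mul_self W).1.spectral_theorem
    rw [Unitary.conjStarAlgAut_apply] at hspec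
    have hU := Unitary.coe_star_mul_self (Matrix.posSemidef_conjTranspose_mul_self W).1.eigenvectorUnitary
    conv_rhs => rw [hspec]
    simp only [S, Matrix.mul_assoc]
    rw [← Matrix.mul_assoc (star _) _ (_ * _), hU, Matrix.one_mul,
      ← Matrix.mul_assoc (Matrix.diagonal _) (Matrix.diagonal _), Matrix.diagonal_mul_diagonal]
    congr 3
    funext i
    simp [← Complex.ofReal_mul, Real.mul_self_sqrt (hnn i)]

lemma exists_unitary_factor (hn₁ : n ≤ n₁) (W : Matrix (Fin n₁) (Fin n) ℂ) :
    ∃ A ∈ Matrix.unitaryGroup (Fin n₁) ℂ,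
      A * (iotaMat hn₁ * (((Matrix.posSemidef_conjTranspose_mul_self W).1.eigenvectorUnitary :
                  Matrix (Fin n) (Fin n) ℂ) *
                Matrix.diagonal ((↑) ∘ (Real.sqrt ·) ∘
                  (Matrix.posSemidef_conjTranspose_mul_self W).1.eigenvalues) *
                (star (Matrix.posSemidef_conjTranspose_mul_self W).1.eigenvectorUnitary :
                  Matrix (Fin n) (Fin n) ℂ))) = W := by
  set S := (((Matrix.posSemidef_conjTranspose_mul_self W).1.eigenvectorUnitary :
                  Matrix (Fin n) (Fin n) ℂ) *
                Matrix.diagonal ((↑) ∘ (Real.sqrt ·) ∘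
                  (Matrix.posSemidef_conjTranspose_mul_self W).1.eigenvalues) *
                (star (Matrix.posSemidef_conjTranspose_mul_self W).1.eigenvectorUnitary :
                  Matrix (Fin n) (Fin n) ℂ)) with hSdef
  have hSH : Sᴴ = S := (wt_props W).1
  have hSS : S * S = Wᴴ * W := (wt_props W).2
  apply exists_mem_unitaryGroup_mul_eq
  rw [Matrix.conjTranspose_mul, hSH, Matrix.mul_assoc S (iotaMat hn₁)ᴴ,
    ← Matrix.mul_assoc (iotaMat hn₁)ᴴ, iotaMat_conjTranspose_mul, Matrix.one_mul, hSS]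

end Corner

section Block

variable {n n₁ n₂ m : ℕ}

/-- Equivalence used to glue blocks into `Fin m`. -/
def blockEquiv (hm : n₁ ≤ m) : Fin n₁ ⊕ Fin (m - n₁) ≃ Fin m :=
  finSumFinEquiv.trans (finCongr (Nat.add_sub_cancel' hm))

lemma blockEquiv_inl (hm : n₁ ≤ m) (j : Fin n₁) :
    blockEquiv hm (Sum.inl j) = Fin.castLE hm j := by
  ext
  simp [blockEquiv]

/-- The block-diagonal matrix `diag(A, 1)` of size `m`. -/
noncomputable def blockUnitary (hm : n₁ ≤ m) (A : Matrix (Fin n₁) (Fin n₁) ℂ) :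
    Matrix (Fin m) (Fin m) ℂ :=
  (Matrix.fromBlocks A 0 0 (1 : Matrix (Fin (m - n₁)) (Fin (m - n₁)) ℂ)).submatrix
    (blockEquiv hm).symm (blockEquiv hm).symm

lemma blockUnitary_mem (hm : n₁ ≤ m) {A : Matrix (Fin n₁) (Fin n₁) ℂ}
    (hA : A ∈ Matrix.unitaryGroup (Fin n₁) ℂ) :
    blockUnitary hm A ∈ Matrix.unitaryGroup (Fin m) ℂ := by
  rw [Matrix.mem_unitaryGroup_iff']
  have hA' := Matrix.mem_unitaryGroup_iff'.mp hA
  rw [Matrix.star_eq_conjTranspose] at hA'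
  rw [blockUnitary, show (star ((Matrix.fromBlocks A 0 0
      (1 : Matrix (Fin (m - n₁)) (Fin (m - n₁)) ℂ)).submatrix
        (blockEquiv hm).symm (blockEquiv hm).symm)) = ((Matrix.fromBlocks A 0 0
      (1 : Matrix (Fin (m - n₁)) (Fin (m - n₁)) ℂ))ᴴ).submatrix
        (blockEquiv hm).symm (blockEquiv hm).symm from Matrix.conjTranspose_submatrix _ _ _,
    Matrix.submatrix_mul_equiv, Matrix.fromBlocks_conjTranspose, Matrix.fromBlocks_multiply]
  simp only [Matrix.conjTranspose_zero, Matrix.conjTranspose_one, Matrix.mul_zero,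
    Matrix.mul_one, Matrix.zero_mul, Matrix.one_mul, add_zero, zero_add, hA']
  rw [Matrix.fromBlocks_one]
  exact Matrix.submatrix_one_equiv (blockEquiv hm).symm

lemma corner_mul_blockUnitary (hn₁ : n ≤ n₁) (hm : n₁ ≤ m) (h₂m : n₂ ≤ m)
    (Y : Matrix (Fin m) (Fin m) ℂ) (A : Matrix (Fin n₁) (Fin n₁) ℂ) :
    (Y * blockUnitary hm A).submatrix (Fin.castLE h₂m) (Fin.castLE (hn₁.trans hm)) =
      (Y.submatrix (Fin.castLE h₂m) (Fin.castLE hm)) * A * iotaMat hn₁ := by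
  ext i k
  rw [Matrix.mul_assoc, mul_iotaMat]
  have hcast : Fin.castLE (hn₁.trans hm) k = blockEquiv hm (Sum.inl (Fin.castLE hn₁ k)) := by
    rw [blockEquiv_inl]
    ext
    simp
  simp only [Matrix.submatrix_apply, Matrix.mul_apply, id_eq]
  rw [← Equiv.sum_comp (blockEquiv hm)
    (fun j => Y (Fin.castLE h₂m i) j * blockUnitary hm A j (Fin.castLE (hn₁.trans hm) k))]
  rw [Fintype.sum_sum_type]
  have hentry_inl : ∀ j : Fin n₁,
      blockUnitary hm A (blockEquiv hm (Sum.inl j)) (Fin.castLE (hn₁.trans hm) k)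
        = A j (Fin.castLE hn₁ k) := by
    intro j
    rw [blockUnitary, Matrix.submatrix_apply, Equiv.symm_apply_apply, hcast,
      Equiv.symm_apply_apply]
    rfl
  have hentry_inr : ∀ j : Fin (m - n₁),
      blockUnitary hm A (blockEquiv hm (Sum.inr j)) (Fin.castLE (hn₁.trans hm) k) = 0 := by
    intro j
    rw [blockUnitary, Matrix.submatrix_apply, Equiv.symm_apply_apply, hcast,
      Equiv.symm_apply_apply]
    rfl
  have hzero : ∑ j : Fin (m - n₁), Y (Fin.castLE h₂m i) (blockEquiv hm (Sum.inr j)) *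
      blockUnitary hm A (blockEquiv hm (Sum.inr j)) (Fin.castLE (hn₁.trans hm) k) = 0 :=
    Finset.sum_eq_zero (fun j _ => by rw [hentry_inr j, mul_zero])
  rw [hzero, add_zero]
  apply Finset.sum_congr rfl
  intro j _
  rw [hentry_inl j, blockEquiv_inl]

end Block


/-- **Singular values of `XW` and `X̃·(WᴴW)^{1/2}` agree in law** (β = 2 case of the
paper's Lemma A.2): for `n ≤ n₁, n₂ ≤ m`, `X` the `n₂×n₁` corner of a Haar unitary
`m×m` matrix, `X̃` the `n₂×n` corner of a Haar unitary `m×m` matrix, and a fixed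
`n₁×n` matrix `W` with `W̃ = (WᴴW)^{1/2}`, the characteristic polynomials of
`(XW)ᴴ(XW)` and `(X̃W̃)ᴴ(X̃W̃)` have the same distribution. -/
theorem truncated_haar_unitary_mul_fixed_matrix_law
    (n n₁ n₂ m : ℕ) (hn₁ : n ≤ n₁) (hn₂ : n ≤ n₂) (h₁m : n₁ ≤ m) (h₂m : n₂ ≤ m)
    (μ₁ μ₂ : Measure (Matrix.unitaryGroup (Fin m) ℂ))
    (hμ₁ : IsHaarUnitary μ₁) (hμ₂ : IsHaarUnitary μ₂)
    (W : Matrix (Fin n₁) (Fin n) ℂ) :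
    Measure.map
      (fun U : Matrix.unitaryGroup (Fin m) ℂ =>
        Matrix.charpoly
          (let X : Matrix (Fin n₂) (Fin n₁) ℂ :=
            Matrix.submatrix (U : Matrix (Fin m) (Fin m) ℂ) (Fin.castLE h₂m) (Fin.castLE h₁m)
          (X * W)ᴴ * (X * W))) μ₁
      = Measure.map
        (fun U : Matrix.unitaryGroup (Fin m) ℂ =>
          Matrix.charpoly
            (let Xt : Matrix (Fin n₂) (Fin n) ℂ :=
              Matrix.submatrix (U : Matrix (Fin m) (Fin m) ℂ) (Fin.castLE h₂m)
                (Fin.castLE (hn₁.trans h₁m))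
            let Wt : Matrix (Fin n) (Fin n) ℂ :=
              ((Matrix.posSemidef_conjTranspose_mul_self W).1.eigenvectorUnitary :
                  Matrix (Fin n) (Fin n) ℂ) *
                Matrix.diagonal ((↑) ∘ (Real.sqrt ·) ∘
                  (Matrix.posSemidef_conjTranspose_mul_self W).1.eigenvalues) *
                (star (Matrix.posSemidef_conjTranspose_mul_self W).1.eigenvectorUnitary :
                  Matrix (Fin n) (Fin n) ℂ)
            (Xt * Wt)ᴴ * (Xt * Wt))) μ₂ := by
  classical
  have hμeq : μ₁ = μ₂ := hμ₁.eq hμ₂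
  obtain ⟨A, hAmem, hAW⟩ := exists_unitary_factor hn₁ W
  set S : Matrix (Fin n) (Fin n) ℂ := (((Matrix.posSemidef_conjTranspose_mul_self W).1.eigenvectorUnitary :
                  Matrix (Fin n) (Fin n) ℂ) *
                Matrix.diagonal ((↑) ∘ (Real.sqrt ·) ∘
                  (Matrix.posSemidef_conjTranspose_mul_self W).1.eigenvalues) *
                (star (Matrix.posSemidef_conjTranspose_mul_self W).1.eigenvectorUnitary :
                  Matrix (Fin n) (Fin n) ℂ)) with hSdef
  set Vg : Matrix.unitaryGroup (Fin m) ℂ := ⟨blockUnitary h₁m A, blockUnitary_mem h₁m hAmem⟩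
    with hVg
  set f₁ : Matrix.unitaryGroup (Fin m) ℂ → Polynomial ℂ := fun U =>
    Matrix.charpoly
      ((Matrix.submatrix (U : Matrix (Fin m) (Fin m) ℂ) (Fin.castLE h₂m) (Fin.castLE h₁m) * W)ᴴ *
        (Matrix.submatrix (U : Matrix (Fin m) (Fin m) ℂ) (Fin.castLE h₂m) (Fin.castLE h₁m) * W))
    with hf₁
  set f₂ : Matrix.unitaryGroup (Fin m) ℂ → Polynomial ℂ := fun U =>
    Matrix.charpoly
      ((Matrix.submatrix (U : Matrix (Fin m) (Fin m) ℂ) (Fin.castLE h₂m)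
          (Fin.castLE (hn₁.trans h₁m)) * S)ᴴ *
        (Matrix.submatrix (U : Matrix (Fin m) (Fin m) ℂ) (Fin.castLE h₂m)
          (Fin.castLE (hn₁.trans h₁m)) * S)) with hf₂
  show Measure.map f₁ μ₁ = Measure.map f₂ μ₂
  have hpt : ∀ U : Matrix.unitaryGroup (Fin m) ℂ, f₁ U = f₂ (U * Vg) := by
    intro U
    have hcoe : ((U * Vg : Matrix.unitaryGroup (Fin m) ℂ) : Matrix (Fin m) (Fin m) ℂ)
        = (U : Matrix (Fin m) (Fin m) ℂ) * blockUnitary h₁m A := rfl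
    have hcorner := corner_mul_blockUnitary hn₁ h₁m h₂m (U : Matrix (Fin m) (Fin m) ℂ) A
    have harg :
        Matrix.submatrix (U : Matrix (Fin m) (Fin m) ℂ) (Fin.castLE h₂m) (Fin.castLE h₁m) * W
        = Matrix.submatrix ((U * Vg : Matrix.unitaryGroup (Fin m) ℂ) : Matrix (Fin m) (Fin m) ℂ)
            (Fin.castLE h₂m) (Fin.castLE (hn₁.trans h₁m)) * S := by
      rw [hcoe, hcorner, ← hAW]
      simp only [Matrix.mul_assoc]
    rw [hf₁, hf₂]
    simp only []
    rw [harg]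
  have hcont₂ : Continuous fun U : Matrix.unitaryGroup (Fin m) ℂ =>
      ((Matrix.submatrix (U : Matrix (Fin m) (Fin m) ℂ) (Fin.castLE h₂m)
          (Fin.castLE (hn₁.trans h₁m)) * S)ᴴ *
        (Matrix.submatrix (U : Matrix (Fin m) (Fin m) ℂ) (Fin.castLE h₂m)
          (Fin.castLE (hn₁.trans h₁m)) * S)) := by
    have h1 : Continuous fun U : Matrix.unitaryGroup (Fin m) ℂ =>
        Matrix.submatrix (U : Matrix (Fin m) (Fin m) ℂ) (Fin.castLE h₂m)
          (Fin.castLE (hn₁.trans h₁m)) * S :=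
      (continuous_subtype_val.matrix_submatrix _ _).matrix_mul continuous_const
    exact h1.matrix_conjTranspose.matrix_mul h1
  have hmf₂ : Measurable f₂ := measurable_charpoly.comp hcont₂.measurable
  have hmV : Measurable fun u : Matrix.unitaryGroup (Fin m) ℂ => u * Vg :=
    measurable_mul_const Vg
  calc Measure.map f₁ μ₁ = Measure.map f₁ μ₂ := by rw [hμeq]
    _ = Measure.map (f₂ ∘ fun u => u * Vg) μ₂ := by
        congr 1
        funext U
        exact hpt U
    _ = Measure.map f₂ (Measure.map (fun u => u * Vg) μ₂) :=
        (Measure.map_map hmf₂ hmV).symm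
    _ = Measure.map f₂ μ₂ := by rw [hμ₂.map_mul_right Vg]
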